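/- arXiv:2511.15455 — 2 statements merged into one kernel-verified Lean document; each statement's English description precedes it below -/
import Mathlib

section
/- Let μ ∈ 𝒫(𝕋^d), q ≥ 1, and let {π_t}_{t∈[0,T]} be a family of admissible q-variations from μ. Suppose {π̂_t}_{t∈[0,T]} ⊆ 𝒫(𝕋^d×𝕋^d) satisfies pr₂♯π_t = pr₁♯π̂_t for all t ∈ [0,T] and lim_{t→0⁺} W^{π̂_t}_q(pr₁♯π̂_t, pr₂♯π̂_t)/t = 0. Then the family of compositions {π_t ∘ π̂_t}_{t∈[0,T]} is a family of admissible q-variations from μ. -/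
open MeasureTheory Filter Topology ProbabilityTheory

noncomputable section

abbrev Torus (d : ℕ) := Fin d → AddCircle (1 : ℝ)

def Wcost {X : Type*} [MeasurableSpace X] [PseudoMetricSpace X]
    (q : ℝ) (π : Measure (X × X)) : ℝ :=
  (∫ z, dist z.1 z.2 ^ q ∂π) ^ (1 / q)

def IsAdmissibleVariation {d : ℕ} (q T : ℝ) (μ : Measure (Torus d))
    (π : ℝ → Measure (Torus d × Torus d)) : Prop :=
  (∀ t ∈ Set.Icc (0:ℝ) T, IsProbabilityMeasure (π t)) ∧
  (∀ t ∈ Set.Icc (0:ℝ) T, (π t).map Prod.fst = μ) ∧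
  (∀ f : BoundedContinuousFunction (Torus d × Torus d) ℝ,
    Tendsto (fun t => ∫ p, f p ∂(π t)) (𝓝[>] (0:ℝ)) (𝓝 (∫ x, f (x, x) ∂μ))) ∧
  (∃ C > 0, Filter.limsup (fun t => Wcost q (π t) / t) (𝓝[>] (0:ℝ)) ≤ C)

/-- Composition of two plans sharing the middle marginal, obtained by gluing the
disintegrations with respect to the common marginal. -/
def planComp {d : ℕ} (π₁₂ π₂₃ : ProbabilityMeasure (Torus d × Torus d)) :
    Measure (Torus d × Torus d) :=
  ((((π₁₂ : Measure (Torus d × Torus d)).map Prod.swap).fst ⊗ₘ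
      ((((π₁₂ : Measure (Torus d × Torus d)).map Prod.swap).condKernel) ×ₖ
        ((π₂₃ : Measure (Torus d × Torus d)).condKernel)))).map Prod.snd

section Aux
variable {α β γ : Type*} [MeasurableSpace α] [MeasurableSpace β] [MeasurableSpace γ]

lemma aux_map_left (μ : Measure α) [SFinite μ] (κ : Kernel α β) (η : Kernel α γ)
    [IsSFiniteKernel κ] [IsMarkovKernel η] :
    (μ ⊗ₘ (κ ×ₖ η)).map (fun p => (p.1, p.2.1)) = μ ⊗ₘ κ := by
  ext s hs
  rw [Measure.map_apply (measurable_fst.prodMk measurable_snd.fst) hs,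
    Measure.compProd_apply ((measurable_fst.prodMk measurable_snd.fst) hs),
    Measure.compProd_apply hs]
  refine lintegral_congr fun a => ?_
  have h1 : (Prod.mk a ⁻¹' ((fun p : α × β × γ => (p.1, p.2.1)) ⁻¹' s))
      = {p : β × γ | p.1 ∈ Prod.mk a ⁻¹' s} := rfl
  rw [h1, ← Kernel.fst_apply' _ _ (measurable_prodMk_left hs), Kernel.fst_prod]

lemma aux_map_right (μ : Measure α) [SFinite μ] (κ : Kernel α β) (η : Kernel α γ)
    [IsMarkovKernel κ] [IsSFiniteKernel η] :
    (μ ⊗ₘ (κ ×ₖ η)).map (fun p => (p.1, p.2.2)) = μ ⊗ₘ η := by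
  ext s hs
  rw [Measure.map_apply (measurable_fst.prodMk measurable_snd.snd) hs,
    Measure.compProd_apply ((measurable_fst.prodMk measurable_snd.snd) hs),
    Measure.compProd_apply hs]
  refine lintegral_congr fun a => ?_
  have h1 : (Prod.mk a ⁻¹' ((fun p : α × β × γ => (p.1, p.2.2)) ⁻¹' s))
      = {p : β × γ | p.2 ∈ Prod.mk a ⁻¹' s} := rfl
  rw [h1, show {p : β × γ | p.2 ∈ Prod.mk a ⁻¹' s} = Prod.snd ⁻¹' (Prod.mk a ⁻¹' s) from rfl,
    ← Kernel.snd_apply' _ _ (measurable_prodMk_left hs), Kernel.snd_prod]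

end Aux

namespace StmtAux
variable {d : ℕ}

def glue (P Ph : ProbabilityMeasure (Torus d × Torus d)) :
    Measure (Torus d × (Torus d × Torus d)) :=
  ((P : Measure (Torus d × Torus d)).map Prod.swap).fst ⊗ₘ
    ((((P : Measure (Torus d × Torus d)).map Prod.swap).condKernel) ×ₖ
      ((Ph : Measure (Torus d × Torus d)).condKernel))

lemma planComp_eq (P Ph : ProbabilityMeasure (Torus d × Torus d)) :
    planComp P Ph = (glue P Ph).map Prod.snd := rfl

instance (P Ph : ProbabilityMeasure (Torus d × Torus d)) :
    IsProbabilityMeasure (glue P Ph) := by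
  haveI h1 : IsProbabilityMeasure ((P : Measure (Torus d × Torus d)).map Prod.swap) :=
    Measure.isProbabilityMeasure_map measurable_swap.aemeasurable
  haveI h2 : IsProbabilityMeasure (((P : Measure (Torus d × Torus d)).map Prod.swap).fst) :=
    Measure.fst.instIsProbabilityMeasure
  unfold glue
  infer_instance

lemma glue_left (P Ph : ProbabilityMeasure (Torus d × Torus d)) :
    (glue P Ph).map (fun p => (p.1, p.2.1))
      = (P : Measure (Torus d × Torus d)).map Prod.swap := by
  haveI : IsProbabilityMeasure ((P : Measure (Torus d × Torus d)).map Prod.swap) :=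
    Measure.isProbabilityMeasure_map measurable_swap.aemeasurable
  rw [glue, aux_map_left, Measure.disintegrate]

lemma glue_P (P Ph : ProbabilityMeasure (Torus d × Torus d)) :
    (glue P Ph).map (fun p => (p.2.1, p.1)) = P := by
  have h := congrArg (Measure.map Prod.swap) (glue_left P Ph)
  rwa [Measure.map_map measurable_swap (measurable_fst.prodMk measurable_snd.fst),
    Measure.map_map measurable_swap measurable_swap,
    (by ext p <;> rfl : Prod.swap ∘ (fun p : Torus d × (Torus d × Torus d) => (p.1, p.2.1))
      = fun p => (p.2.1, p.1)),
    (by ext p <;> rfl : (Prod.swap ∘ Prod.swap : (Torus d × Torus d) → _) = id),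
    Measure.map_id] at h

lemma glue_right (P Ph : ProbabilityMeasure (Torus d × Torus d))
    (h : (P : Measure (Torus d × Torus d)).map Prod.snd
        = (Ph : Measure (Torus d × Torus d)).map Prod.fst) :
    (glue P Ph).map (fun p => (p.1, p.2.2)) = Ph := by
  haveI : IsProbabilityMeasure ((P : Measure (Torus d × Torus d)).map Prod.swap) :=
    Measure.isProbabilityMeasure_map measurable_swap.aemeasurable
  have hfst : ((P : Measure (Torus d × Torus d)).map Prod.swap).fst
      = ((Ph : Measure (Torus d × Torus d))).fst := by
    show ((P : Measure (Torus d × Torus d)).map Prod.swap).map Prod.fst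
        = ((Ph : Measure (Torus d × Torus d))).map Prod.fst
    rw [Measure.map_map measurable_fst measurable_swap]
    exact h
  rw [glue, aux_map_right, hfst, Measure.disintegrate]

end StmtAux

namespace StmtAux
open scoped ENNReal
variable {d : ℕ}

lemma dist_cont : Continuous fun z : Torus d × Torus d => dist z.1 z.2 :=
  continuous_fst.dist continuous_snd

lemma wcost_eq (q : ℝ) (hq : 1 ≤ q) (m : Measure (Torus d × Torus d)) :
    Wcost q m = ((∫⁻ z, (ENNReal.ofReal (dist z.1 z.2)) ^ q ∂m) ^ (1/q)).toReal := by
  have hq0 : (0:ℝ) ≤ q := le_trans zero_le_one hq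
  have hcont : Continuous fun z : Torus d × Torus d => dist z.1 z.2 ^ q :=
    dist_cont.rpow_const (fun x => Or.inr hq0)
  rw [Wcost, integral_eq_lintegral_of_nonneg_ae
    (ae_of_all _ fun z => Real.rpow_nonneg dist_nonneg q) hcont.aestronglyMeasurable,
    ENNReal.toReal_rpow]
  congr 2
  refine lintegral_congr fun z => ?_
  rw [ENNReal.ofReal_rpow_of_nonneg dist_nonneg hq0]

lemma exists_bound : ∃ B : ℝ, 0 ≤ B ∧ ∀ x y : Torus d, dist x y ≤ B := by
  obtain ⟨C, hC⟩ := Metric.isBounded_iff.1 (isCompact_univ (X := Torus d)).isBounded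
  exact ⟨max C 0, le_max_right _ _, fun x y =>
    le_trans (hC (Set.mem_univ x) (Set.mem_univ y)) (le_max_left _ _)⟩

lemma J_ne_top (q : ℝ) (hq0 : 0 ≤ q) (m : Measure (Torus d × Torus d)) [IsProbabilityMeasure m] :
    (∫⁻ z, (ENNReal.ofReal (dist z.1 z.2)) ^ q ∂m) ≠ ∞ := by
  obtain ⟨B, hB0, hB⟩ := exists_bound (d := d)
  refine ne_top_of_le_ne_top
    (ENNReal.rpow_lt_top_of_nonneg (x := ENNReal.ofReal B) hq0 ENNReal.ofReal_ne_top).ne ?_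
  calc ∫⁻ z, (ENNReal.ofReal (dist z.1 z.2)) ^ q ∂m
      ≤ ∫⁻ _, (ENNReal.ofReal B) ^ q ∂m :=
        lintegral_mono fun z => ENNReal.rpow_le_rpow (ENNReal.ofReal_le_ofReal (hB _ _)) hq0
    _ = (ENNReal.ofReal B) ^ q := by rw [lintegral_const, measure_univ, mul_one]

lemma Jrt_ne_top (q : ℝ) (hq : 1 ≤ q) (m : Measure (Torus d × Torus d))
    [IsProbabilityMeasure m] :
    ((∫⁻ z, (ENNReal.ofReal (dist z.1 z.2)) ^ q ∂m) ^ (1/q)) ≠ ∞ :=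
  (ENNReal.rpow_lt_top_of_nonneg (by positivity)
    (J_ne_top q (le_trans zero_le_one hq) m)).ne

lemma lp_triangle {W : Type*} [MeasurableSpace W] (G : Measure W) (q : ℝ) (hq : 1 ≤ q)
    (f g h : W → ℝ≥0∞) (hg : AEMeasurable g G) (hh : AEMeasurable h G)
    (hle : ∀ w, f w ≤ g w + h w) :
    (∫⁻ w, f w ^ q ∂G) ^ (1/q) ≤ (∫⁻ w, g w ^ q ∂G) ^ (1/q) + (∫⁻ w, h w ^ q ∂G) ^ (1/q) := by
  refine le_trans ?_ (ENNReal.lintegral_Lp_add_le hg hh hq)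
  exact ENNReal.rpow_le_rpow
    (lintegral_mono fun w => ENNReal.rpow_le_rpow (hle w) (le_trans zero_le_one hq))
    (by positivity)

end StmtAux

namespace StmtAux
open scoped ENNReal
variable {d : ℕ}

instance : BorelSpace (Torus d × Torus d) := Prod.borelSpace

instance : BorelSpace (Torus d × Torus d × Torus d) := Prod.borelSpace

instance planComp_prob (P Ph : ProbabilityMeasure (Torus d × Torus d)) :
    IsProbabilityMeasure (planComp P Ph) := by
  rw [planComp_eq]
  exact Measure.isProbabilityMeasure_map measurable_snd.aemeasurable

lemma c_meas (q : ℝ) :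
    Measurable fun z : Torus d × Torus d => (ENNReal.ofReal (dist z.1 z.2)) ^ q :=
  (ENNReal.continuous_rpow_const.comp (ENNReal.continuous_ofReal.comp dist_cont)).measurable

lemma lint_planComp (q : ℝ) (P Ph : ProbabilityMeasure (Torus d × Torus d)) :
    ∫⁻ z, (ENNReal.ofReal (dist z.1 z.2)) ^ q ∂(planComp P Ph)
      = ∫⁻ w, (ENNReal.ofReal (dist w.2.1 w.2.2)) ^ q ∂(glue P Ph) := by
  rw [planComp_eq, lintegral_map (c_meas q) measurable_snd]

lemma lint_P (q : ℝ) (P Ph : ProbabilityMeasure (Torus d × Torus d)) :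
    ∫⁻ z, (ENNReal.ofReal (dist z.1 z.2)) ^ q ∂(P : Measure (Torus d × Torus d))
      = ∫⁻ w, (ENNReal.ofReal (dist w.2.1 w.1)) ^ q ∂(glue P Ph) := by
  conv_lhs => rw [← glue_P P Ph]
  rw [lintegral_map (c_meas q) (measurable_snd.fst.prodMk measurable_fst)]

lemma lint_Ph (q : ℝ) (P Ph : ProbabilityMeasure (Torus d × Torus d))
    (h : (P : Measure (Torus d × Torus d)).map Prod.snd
        = (Ph : Measure (Torus d × Torus d)).map Prod.fst) :
    ∫⁻ z, (ENNReal.ofReal (dist z.1 z.2)) ^ q ∂(Ph : Measure (Torus d × Torus d))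
      = ∫⁻ w, (ENNReal.ofReal (dist w.1 w.2.2)) ^ q ∂(glue P Ph) := by
  conv_lhs => rw [← glue_right P Ph h]
  rw [lintegral_map (c_meas q) (measurable_fst.prodMk measurable_snd.snd)]

lemma wcost_triangle1 (q : ℝ) (hq : 1 ≤ q) (P Ph : ProbabilityMeasure (Torus d × Torus d))
    (h : (P : Measure (Torus d × Torus d)).map Prod.snd
        = (Ph : Measure (Torus d × Torus d)).map Prod.fst) :
    Wcost q (planComp P Ph) ≤ Wcost q (P : Measure (Torus d × Torus d)) + Wcost q (Ph : Measure (Torus d × Torus d)) := by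
  have hfin1 : ((∫⁻ w, (ENNReal.ofReal (dist w.2.1 w.1)) ^ q ∂(glue P Ph)) ^ (1/q)) ≠ ⊤ := by
    rw [← lint_P q P Ph]; exact Jrt_ne_top q hq _
  have hfin2 : ((∫⁻ w, (ENNReal.ofReal (dist w.1 w.2.2)) ^ q ∂(glue P Ph)) ^ (1/q)) ≠ ⊤ := by
    rw [← lint_Ph q P Ph h]; exact Jrt_ne_top q hq _
  have tri := lp_triangle (glue P Ph) q hq
    (fun w => ENNReal.ofReal (dist w.2.1 w.2.2))
    (fun w => ENNReal.ofReal (dist w.2.1 w.1))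
    (fun w => ENNReal.ofReal (dist w.1 w.2.2))
    ((ENNReal.continuous_ofReal.comp (continuous_snd.fst.dist continuous_fst)).measurable.aemeasurable)
    ((ENNReal.continuous_ofReal.comp (continuous_fst.dist continuous_snd.snd)).measurable.aemeasurable)
    (fun w => by
      calc ENNReal.ofReal (dist w.2.1 w.2.2)
          ≤ ENNReal.ofReal (dist w.2.1 w.1 + dist w.1 w.2.2) :=
            ENNReal.ofReal_le_ofReal (dist_triangle _ _ _)
        _ = _ := ENNReal.ofReal_add dist_nonneg dist_nonneg)
  rw [wcost_eq q hq, wcost_eq q hq, wcost_eq q hq, lint_planComp q P Ph, lint_P q P Ph,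
    lint_Ph q P Ph h, ← ENNReal.toReal_add hfin1 hfin2]
  exact ENNReal.toReal_mono (ENNReal.add_ne_top.2 ⟨hfin1, hfin2⟩) tri

lemma wcost_triangle2 (q : ℝ) (hq : 1 ≤ q) (P Ph : ProbabilityMeasure (Torus d × Torus d))
    (h : (P : Measure (Torus d × Torus d)).map Prod.snd
        = (Ph : Measure (Torus d × Torus d)).map Prod.fst) :
    Wcost q (P : Measure (Torus d × Torus d)) ≤ Wcost q (planComp P Ph) + Wcost q (Ph : Measure (Torus d × Torus d)) := by
  have hfin1 : ((∫⁻ w, (ENNReal.ofReal (dist w.2.1 w.2.2)) ^ q ∂(glue P Ph)) ^ (1/q)) ≠ ⊤ := by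
    rw [← lint_planComp q P Ph]; exact Jrt_ne_top q hq _
  have hfin2 : ((∫⁻ w, (ENNReal.ofReal (dist w.1 w.2.2)) ^ q ∂(glue P Ph)) ^ (1/q)) ≠ ⊤ := by
    rw [← lint_Ph q P Ph h]; exact Jrt_ne_top q hq _
  have tri := lp_triangle (glue P Ph) q hq
    (fun w => ENNReal.ofReal (dist w.2.1 w.1))
    (fun w => ENNReal.ofReal (dist w.2.1 w.2.2))
    (fun w => ENNReal.ofReal (dist w.1 w.2.2))
    ((ENNReal.continuous_ofReal.comp (continuous_snd.fst.dist continuous_snd.snd)).measurable.aemeasurable)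
    ((ENNReal.continuous_ofReal.comp (continuous_fst.dist continuous_snd.snd)).measurable.aemeasurable)
    (fun w => by
      calc ENNReal.ofReal (dist w.2.1 w.1)
          ≤ ENNReal.ofReal (dist w.2.1 w.2.2 + dist w.2.2 w.1) :=
            ENNReal.ofReal_le_ofReal (dist_triangle _ _ _)
        _ = _ := by rw [dist_comm w.2.2 w.1]; exact ENNReal.ofReal_add dist_nonneg dist_nonneg)
  rw [wcost_eq q hq, wcost_eq q hq, wcost_eq q hq, lint_planComp q P Ph, lint_P q P Ph,
    lint_Ph q P Ph h, ← ENNReal.toReal_add hfin1 hfin2]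
  exact ENNReal.toReal_mono (ENNReal.add_ne_top.2 ⟨hfin1, hfin2⟩) tri

lemma integral_dist_le_wcost (q : ℝ) (hq : 1 ≤ q) (m : Measure (Torus d × Torus d))
    [IsProbabilityMeasure m] :
    ∫ z, dist z.1 z.2 ∂m ≤ Wcost q m := by
  have hq0 : (0:ℝ) ≤ q := le_trans zero_le_one hq
  have hnn : ∀ z : Torus d × Torus d, ‖dist z.1 z.2‖ₑ = ENNReal.ofReal (dist z.1 z.2) :=
    fun z => Real.enorm_eq_ofReal dist_nonneg
  have h1 : ∫ z, dist z.1 z.2 ∂m = (∫⁻ z, ENNReal.ofReal (dist z.1 z.2) ∂m).toReal :=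
    integral_eq_lintegral_of_nonneg_ae (ae_of_all _ fun z => dist_nonneg)
      dist_cont.aestronglyMeasurable
  rw [h1, wcost_eq q hq]
  refine ENNReal.toReal_mono (Jrt_ne_top q hq m) ?_
  have key := eLpNorm_le_eLpNorm_of_exponent_le (μ := m)
    (f := fun z : Torus d × Torus d => dist z.1 z.2) (p := 1) (q := ENNReal.ofReal q)
    (ENNReal.one_le_ofReal.2 hq) dist_cont.aestronglyMeasurable
  rw [eLpNorm_one_eq_lintegral_enorm,
    eLpNorm_eq_lintegral_rpow_enorm_toReal (by simp [ENNReal.ofReal_eq_zero]; linarith)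
      ENNReal.ofReal_ne_top, ENNReal.toReal_ofReal hq0] at key
  simpa only [hnn] using key

end StmtAux

namespace StmtAux
variable {d : ℕ}

lemma int_planComp (P Ph : ProbabilityMeasure (Torus d × Torus d))
    (f : BoundedContinuousFunction (Torus d × Torus d) ℝ) :
    ∫ p, f p ∂(planComp P Ph) = ∫ w, f w.2 ∂(glue P Ph) := by
  rw [planComp_eq, integral_map measurable_snd.aemeasurable f.continuous.aestronglyMeasurable]

lemma int_P (P Ph : ProbabilityMeasure (Torus d × Torus d))
    (f : BoundedContinuousFunction (Torus d × Torus d) ℝ) :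
    ∫ p, f p ∂(P : Measure (Torus d × Torus d)) = ∫ w, f (w.2.1, w.1) ∂(glue P Ph) := by
  conv_lhs => rw [← glue_P P Ph]
  rw [integral_map (measurable_snd.fst.prodMk measurable_fst).aemeasurable
    f.continuous.aestronglyMeasurable]

lemma int_dist_Ph (P Ph : ProbabilityMeasure (Torus d × Torus d))
    (h : (P : Measure (Torus d × Torus d)).map Prod.snd
        = (Ph : Measure (Torus d × Torus d)).map Prod.fst) :
    ∫ z, dist z.1 z.2 ∂(Ph : Measure (Torus d × Torus d))
      = ∫ w, dist w.1 w.2.2 ∂(glue P Ph) := by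
  conv_lhs => rw [← glue_right P Ph h]
  rw [integral_map (measurable_fst.prodMk measurable_snd.snd).aemeasurable
    dist_cont.aestronglyMeasurable]

lemma modulus (f : BoundedContinuousFunction (Torus d × Torus d) ℝ) {ε δ : ℝ}
    (hε : 0 < ε) (hδ : 0 < δ)
    (hf : ∀ a b : Torus d × Torus d, dist a b < δ → dist (f a) (f b) < ε)
    (w : Torus d × (Torus d × Torus d)) :
    |f w.2 - f (w.2.1, w.1)| ≤ ε + (2 * ‖f‖ / δ) * dist w.1 w.2.2 := by
  have hK : 0 ≤ 2 * ‖f‖ / δ := by positivity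
  have hdd : dist w.2 (w.2.1, w.1) = dist w.2.2 w.1 := by
    rw [Prod.dist_eq, dist_self]
    exact max_eq_right dist_nonneg
  by_cases hcase : dist w.1 w.2.2 < δ
  · have : dist (f w.2) (f (w.2.1, w.1)) < ε := by
      apply hf
      rw [hdd, dist_comm]
      exact hcase
    rw [Real.dist_eq] at this
    nlinarith [dist_nonneg (x := w.1) (y := w.2.2)]
  · push_neg at hcase
    have h2 : |f w.2 - f (w.2.1, w.1)| ≤ 2 * ‖f‖ := by
      have b1 := f.norm_coe_le_norm w.2
      have b2 := f.norm_coe_le_norm (w.2.1, w.1)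
      rw [Real.norm_eq_abs] at b1 b2
      have := abs_sub (f w.2) (f (w.2.1, w.1))
      calc |f w.2 - f (w.2.1, w.1)| ≤ |f w.2| + |f (w.2.1, w.1)| := abs_sub _ _
        _ ≤ 2 * ‖f‖ := by linarith
    have h3 : 2 * ‖f‖ ≤ (2 * ‖f‖ / δ) * dist w.1 w.2.2 := by
      rw [div_mul_eq_mul_div, le_div_iff₀ hδ]
      have hn : 0 ≤ 2 * ‖f‖ := by positivity
      nlinarith
    linarith

lemma key_bound (P Ph : ProbabilityMeasure (Torus d × Torus d))
    (h : (P : Measure (Torus d × Torus d)).map Prod.snd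
        = (Ph : Measure (Torus d × Torus d)).map Prod.fst)
    (f : BoundedContinuousFunction (Torus d × Torus d) ℝ) {ε δ : ℝ}
    (hε : 0 < ε) (hδ : 0 < δ)
    (hf : ∀ a b : Torus d × Torus d, dist a b < δ → dist (f a) (f b) < ε) :
    |∫ p, f p ∂(planComp P Ph) - ∫ p, f p ∂(P : Measure (Torus d × Torus d))|
      ≤ ε + (2 * ‖f‖ / δ) * ∫ z, dist z.1 z.2 ∂(Ph : Measure (Torus d × Torus d)) := by
  set G := glue P Ph with hG
  set K := 2 * ‖f‖ / δ with hKdef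
  have hK : 0 ≤ K := by positivity
  have int1 : Integrable (fun w : Torus d × (Torus d × Torus d) => f w.2) G := by
    have := (f.compContinuous (⟨fun w : Torus d × (Torus d × Torus d) => w.2,
      continuous_snd⟩ : C(Torus d × (Torus d × Torus d), Torus d × Torus d))).integrable G
    exact this
  have int2 : Integrable (fun w : Torus d × (Torus d × Torus d) => f (w.2.1, w.1)) G := by
    have := (f.compContinuous (⟨fun w : Torus d × (Torus d × Torus d) => (w.2.1, w.1),
      continuous_snd.fst.prodMk continuous_fst⟩ :
        C(Torus d × (Torus d × Torus d), Torus d × Torus d))).integrable G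
    exact this
  have intd : Integrable (fun w : Torus d × (Torus d × Torus d) => dist w.1 w.2.2) G :=
    (BoundedContinuousFunction.mkOfCompact
      ⟨fun w : Torus d × (Torus d × Torus d) => dist w.1 w.2.2,
        continuous_fst.dist continuous_snd.snd⟩).integrable G
  have intbound : Integrable
      (fun w : Torus d × (Torus d × Torus d) => ε + K * dist w.1 w.2.2) G :=
    (integrable_const ε).add (intd.const_mul K)
  calc |∫ p, f p ∂(planComp P Ph) - ∫ p, f p ∂(P : Measure (Torus d × Torus d))|
      = |∫ w, (f w.2 - f (w.2.1, w.1)) ∂G| := by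
        rw [int_planComp P Ph f, int_P P Ph f, ← integral_sub int1 int2]
    _ ≤ ∫ w, |f w.2 - f (w.2.1, w.1)| ∂G := by
        simpa [Real.norm_eq_abs] using norm_integral_le_integral_norm
          (fun w : Torus d × (Torus d × Torus d) => f w.2 - f (w.2.1, w.1)) (μ := G)
    _ ≤ ∫ w, (ε + K * dist w.1 w.2.2) ∂G :=
        integral_mono (int1.sub int2).abs intbound (fun w => modulus f hε hδ hf w)
    _ = ε + K * ∫ w, dist w.1 w.2.2 ∂G := by
        rw [integral_add (integrable_const ε) (intd.const_mul K), integral_const,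
          probReal_univ, integral_const_mul]
        simp
    _ = ε + K * ∫ z, dist z.1 z.2 ∂(Ph : Measure (Torus d × Torus d)) := by
        rw [int_dist_Ph P Ph h]

end StmtAux

open StmtAux

theorem stmt1 {d : ℕ} (q T : ℝ) (hq : 1 ≤ q) (hT : 0 < T)
    (μ : Measure (Torus d)) [IsProbabilityMeasure μ]
    (π πhat : ℝ → ProbabilityMeasure (Torus d × Torus d))
    (hπ : IsAdmissibleVariation q T μ (fun t => (π t : Measure (Torus d × Torus d))))
    (hmarg : ∀ t ∈ Set.Icc (0:ℝ) T,
      ((π t : Measure (Torus d × Torus d))).map Prod.snd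
        = ((πhat t : Measure (Torus d × Torus d))).map Prod.fst)
    (hsmall : Tendsto (fun t => Wcost q (πhat t : Measure (Torus d × Torus d)) / t)
      (𝓝[>] (0:ℝ)) (𝓝 0)) :
    IsAdmissibleVariation q T μ (fun t => planComp (π t) (πhat t)) := by
  obtain ⟨hprob, hfst, hnarrow, C, hC, hlim⟩ := hπ
  have hev_mem : ∀ᶠ t in 𝓝[>] (0:ℝ), t ∈ Set.Ioc (0:ℝ) T :=
    Ioc_mem_nhdsGT_of_mem ⟨le_refl 0, hT⟩
  have hmarg' : ∀ t ∈ Set.Ioc (0:ℝ) T,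
      (π t : Measure (Torus d × Torus d)).map Prod.snd
        = (πhat t : Measure (Torus d × Torus d)).map Prod.fst :=
    fun t ht => hmarg t ⟨le_of_lt ht.1, ht.2⟩
  have hWnn : ∀ (m : Measure (Torus d × Torus d)), 0 ≤ Wcost q m := fun m =>
    Real.rpow_nonneg (integral_nonneg fun z => Real.rpow_nonneg dist_nonneg q) _
  have hWh0 : Tendsto (fun t => Wcost q ((πhat t : Measure (Torus d × Torus d))))
      (𝓝[>] (0:ℝ)) (𝓝 0) := by
    have h1 : Tendsto (fun t : ℝ => t) (𝓝[>] (0:ℝ)) (𝓝 0) :=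
      tendsto_id.mono_left nhdsWithin_le_nhds
    have h2 := hsmall.mul h1
    rw [zero_mul] at h2
    refine h2.congr' ?_
    filter_upwards [hev_mem] with t ht
    exact div_mul_cancel₀ _ (ne_of_gt ht.1)
  refine ⟨fun t ht => planComp_prob (π t) (πhat t), ?_, ?_, ?_⟩
  · -- first marginal is μ
    intro t ht
    have h1 := congrArg (Measure.map Prod.fst) (glue_P (π t) (πhat t))
    rw [Measure.map_map measurable_fst (measurable_snd.fst.prodMk measurable_fst)] at h1
    show (planComp (π t) (πhat t)).map Prod.fst = μ
    rw [planComp_eq, Measure.map_map measurable_fst measurable_snd]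
    rw [show (Prod.fst ∘ Prod.snd : Torus d × (Torus d × Torus d) → Torus d)
      = (Prod.fst ∘ fun p : Torus d × (Torus d × Torus d) => (p.2.1, p.1)) from rfl, h1]
    exact hfst t ht
  · -- narrow convergence
    intro f
    rw [Metric.tendsto_nhds]
    intro ε hε
    have hf_uc : UniformContinuous f :=
      CompactSpace.uniformContinuous_of_continuous f.continuous
    obtain ⟨δ, hδ, hfδ⟩ := Metric.uniformContinuous_iff.1 hf_uc (ε/4) (by linarith)
    have hnear := Metric.tendsto_nhds.1 (hnarrow f) (ε/2) (by linarith)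
    have hK : (0:ℝ) ≤ 2 * ‖f‖ / δ := by positivity
    have hKW : Tendsto (fun t => (2 * ‖f‖ / δ) * Wcost q (πhat t : Measure (Torus d × Torus d)))
        (𝓝[>] (0:ℝ)) (𝓝 0) := by
      have := hWh0.const_mul (2 * ‖f‖ / δ)
      rwa [mul_zero] at this
    have hKWsm := Metric.tendsto_nhds.1 hKW (ε/8) (by linarith)
    filter_upwards [hev_mem, hnear, hKWsm] with t ht h1 h2
    have hb := key_bound (π t) (πhat t) (hmarg' t ht) f (ε := ε/4) (δ := δ)
      (by linarith) hδ (fun a b hab => hfδ hab)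
    have hdle : ∫ z, dist z.1 z.2 ∂(πhat t : Measure (Torus d × Torus d))
        ≤ Wcost q (πhat t : Measure (Torus d × Torus d)) := integral_dist_le_wcost q hq _
    have h2' : (2 * ‖f‖ / δ) * Wcost q (πhat t : Measure (Torus d × Torus d)) < ε/8 := by
      rw [Real.dist_eq, sub_zero] at h2
      exact (abs_lt.1 h2).2
    have hKd : (2 * ‖f‖ / δ) * ∫ z, dist z.1 z.2 ∂(πhat t : Measure (Torus d × Torus d))
        < ε/8 := lt_of_le_of_lt (mul_le_mul_of_nonneg_left hdle hK) h2'
    have htri := dist_triangle (∫ p, f p ∂(planComp (π t) (πhat t)))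
      (∫ p, f p ∂(π t : Measure (Torus d × Torus d))) (∫ x, f (x, x) ∂μ)
    rw [Real.dist_eq (∫ p, f p ∂(planComp (π t) (πhat t)))] at htri
    calc dist (∫ p, f p ∂(planComp (π t) (πhat t))) (∫ x, f (x, x) ∂μ)
        ≤ |∫ p, f p ∂(planComp (π t) (πhat t)) - ∫ p, f p ∂(π t : Measure (Torus d × Torus d))|
          + dist (∫ p, f p ∂(π t : Measure (Torus d × Torus d))) (∫ x, f (x, x) ∂μ) := htri
      _ < ε := by linarith
  · -- limsup
    refine ⟨C + 1, by linarith, ?_⟩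
    set l := 𝓝[>] (0:ℝ)
    set g := fun t => Wcost q (planComp (π t) (πhat t)) / t with hg
    set g1 := fun t => Wcost q (π t : Measure (Torus d × Torus d)) / t with hg1
    set g2 := fun t => Wcost q (πhat t : Measure (Torus d × Torus d)) / t with hg2
    have hg_le : ∀ᶠ t in l, g t ≤ g1 t + g2 t := by
      filter_upwards [hev_mem] with t ht
      have tri := wcost_triangle1 q hq (π t) (πhat t) (hmarg' t ht)
      show Wcost q (planComp (π t) (πhat t)) / t
        ≤ Wcost q (π t : Measure (Torus d × Torus d)) / t
          + Wcost q (πhat t : Measure (Torus d × Torus d)) / t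
      rw [← add_div, div_eq_mul_inv, div_eq_mul_inv]
      exact mul_le_mul_of_nonneg_right tri (inv_nonneg.2 ht.1.le)
    have hg1_le : ∀ᶠ t in l, g1 t ≤ g t + g2 t := by
      filter_upwards [hev_mem] with t ht
      have tri := wcost_triangle2 q hq (π t) (πhat t) (hmarg' t ht)
      show Wcost q (π t : Measure (Torus d × Torus d)) / t
        ≤ Wcost q (planComp (π t) (πhat t)) / t
          + Wcost q (πhat t : Measure (Torus d × Torus d)) / t
      rw [← add_div, div_eq_mul_inv, div_eq_mul_inv]
      exact mul_le_mul_of_nonneg_right tri (inv_nonneg.2 ht.1.le)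
    have hg2_lt : ∀ᶠ t in l, g2 t < 1/2 := by
      filter_upwards [Metric.tendsto_nhds.1 hsmall (1/2) (by norm_num)] with t h
      exact (abs_lt.1 (by simpa [Real.dist_eq] using h)).2
    have hg0 : ∀ᶠ t in l, 0 ≤ g t := by
      filter_upwards [hev_mem] with t ht
      exact div_nonneg (hWnn _) ht.1.le
    by_cases hb : Filter.IsBoundedUnder (· ≤ ·) l g1
    · have h1 : ∀ᶠ t in l, g1 t < C + 1/2 :=
        Filter.eventually_lt_of_limsup_lt (lt_of_le_of_lt hlim (by linarith)) hb
      have hev : ∀ᶠ t in l, g t ≤ C + 1 := by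
        filter_upwards [hg_le, h1, hg2_lt] with t a b c
        linarith
      have hcob : Filter.IsCoboundedUnder (· ≤ ·) l g :=
        Filter.IsBoundedUnder.isCoboundedUnder_le ⟨0, Filter.eventually_map.2 hg0⟩
      exact Filter.limsup_le_of_le hcob hev
    · have hgb : ¬ Filter.IsBoundedUnder (· ≤ ·) l g := by
        intro hWb
        obtain ⟨M, hM⟩ := hWb
        rw [Filter.eventually_map] at hM
        refine hb ⟨M + 1/2, ?_⟩
        rw [Filter.eventually_map]
        filter_upwards [hg1_le, hg2_lt, hM] with t a b c
        linarith
      have hempty : {a : ℝ | ∀ᶠ t in l, g t ≤ a} = ∅ := by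
        ext a
        simp only [Set.mem_setOf_eq, Set.mem_empty_iff_false, iff_false]
        intro ha
        exact hgb ⟨a, Filter.eventually_map.2 ha⟩
      rw [Filter.limsup_eq, hempty, Real.sInf_empty]
      linarith
end
end

section
/- Let 𝕏 be a separable metric space, 𝕐 a metric space, h : 𝕏 → 𝕐 a continuous map, and 𝔽 : 𝕏 ⇉ 𝕐 a weakly measurable set-valued map with nonempty compact values. Then there exists a Borel map Pr_𝔽 : 𝕏 → 𝕐 such that Pr_𝔽(x) ∈ 𝔽(x) for all x ∈ 𝕏 and d_𝕐(h(x), Pr_𝔽(x)) = dist(h(x), 𝔽(x)) for all x ∈ 𝕏, where dist(y, A) := inf_{a∈A} d_𝕐(y,a). -/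
open MeasureTheory Filter Topology Metric Set

open scoped Classical in
noncomputable def selT {I : Type*} (b : I → ℕ → Bool) (ev : Set I → Prop) : ℕ → Set I
  | 0 => Set.univ
  | (k+1) =>
      if ev {i ∈ selT b ev k | b i k = false}
      then {i ∈ selT b ev k | b i k = false}
      else {i ∈ selT b ev k | b i k = true}

lemma exists_injective_nat_bool (X : Type*) [MetricSpace X]
    [TopologicalSpace.SeparableSpace X] : ∃ e : X → ℕ → Bool, Function.Injective e := by
  rcases isEmpty_or_nonempty X with hX | hX
  · exact ⟨fun x => isEmptyElim x, fun a => isEmptyElim a⟩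
  obtain ⟨u, hu⟩ := TopologicalSpace.exists_dense_seq X
  let d : ℕ ≃ ℕ × ℚ := (Denumerable.eqv (ℕ × ℚ)).symm
  refine ⟨fun x n => decide (dist x (u (d n).1) < ((d n).2 : ℝ)), ?_⟩
  intro x x' hxx'
  by_contra hne
  have hr : 0 < dist x x' := dist_pos.2 hne
  obtain ⟨k, hk⟩ := (Metric.denseRange_iff.1 hu) x (dist x x' / 4) (by linarith)
  obtain ⟨q, hq1, hq2⟩ := exists_rat_btwn (show dist x x' / 4 < dist x x' / 2 by linarith)
  have h1 : dist x (u k) < (q : ℝ) := lt_trans hk hq1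
  have h2 : ¬ (dist x' (u k) < (q : ℝ)) := by
    intro hcon
    have ht := dist_triangle x (u k) x'
    rw [dist_comm (u k) x'] at ht
    linarith
  have hfun := congrFun hxx' (d.symm (k, q))
  simp only [Equiv.apply_symm_apply] at hfun
  rw [decide_eq_decide] at hfun
  exact h2 (hfun.mp h1)

lemma exists_injective_pair_nat_bool {X : Type*} (e : X → ℕ → Bool)
    (he : Function.Injective e) :
    ∃ e' : X × ℕ → ℕ → Bool, Function.Injective e' := by
  refine ⟨fun p k => if k % 2 = 0 then e p.1 (k / 2) else decide (k / 2 < p.2), ?_⟩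
  rintro ⟨x, n⟩ ⟨x', n'⟩ hp
  have h1 : ∀ m, e x m = e x' m := by
    intro m
    have hthis := congrFun hp (2 * m)
    have e1 : (2 * m) % 2 = 0 := by omega
    have e2 : (2 * m) / 2 = m := by omega
    simpa [e1, e2] using hthis
  have h2 : ∀ m : ℕ, (m < n ↔ m < n') := by
    intro m
    have hthis := congrFun hp (2 * m + 1)
    have e1 : (2 * m + 1) % 2 = 1 := by omega
    have e2 : (2 * m + 1) / 2 = m := by omega
    simp only [e1, e2] at hthis
    simpa [decide_eq_decide] using hthis
  have hxx : x = x' := he (funext h1)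
  have hnn : n = n' := by
    have ha := h2 n
    have hb := h2 n'
    have : ¬ n < n' := fun hlt => (lt_irrefl n) (ha.mpr hlt)
    have : ¬ n' < n := fun hlt => (lt_irrefl n') (hb.mp hlt)
    omega
  simp [hxx, hnn]

section StepLemma

variable {X Y : Type*}
    [MetricSpace X] [TopologicalSpace.SeparableSpace X] [MeasurableSpace X] [BorelSpace X]
    [MetricSpace Y] [MeasurableSpace Y] [BorelSpace Y]

theorem step19
    (G : X → Set Y) (hne : ∀ x, (G x).Nonempty) (hcpt : ∀ x, IsCompact (G x))
    (hmeas : ∀ C : Set Y, IsClosed C → MeasurableSet {x | (G x ∩ C).Nonempty})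
    (δ : ℝ) (hδ : 0 < δ) :
    ∃ G' : X → Set Y, (∀ x, (G' x).Nonempty) ∧ (∀ x, IsCompact (G' x)) ∧
      (∀ C : Set Y, IsClosed C → MeasurableSet {x | (G' x ∩ C).Nonempty}) ∧
      (∀ x, G' x ⊆ G x) ∧ (∀ x, Metric.diam (G' x) ≤ 2 * δ) := by
  classical
  obtain ⟨W, Wopen, Wcover, Wlf, Wsub⟩ :=
    precise_refinement (fun y : Y => ball y δ) (fun y => isOpen_ball)
      (Set.iUnion_eq_univ_iff.2 fun y => ⟨y, mem_ball_self hδ⟩)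
  let I : Type _ := {i : Y // ∃ x, (G x ∩ closure (W i)).Nonempty}
  let CW : I → Set Y := fun i => closure (W i.1)
  have lf : LocallyFinite CW := Wlf.closure.comp_injective Subtype.val_injective
  have CWcl : ∀ i, IsClosed (CW i) := fun i => isClosed_closure
  have hHfin : ∀ x, {i : I | (G x ∩ CW i).Nonempty}.Finite := by
    intro x
    simpa [Set.inter_comm] using lf.finite_nonempty_inter_compact (hcpt x)
  -- build an injective bit-labelling of `I`
  obtain ⟨b, hbinj⟩ : ∃ b : I → ℕ → Bool, Function.Injective b := by
    obtain ⟨e, he⟩ := exists_injective_nat_bool X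
    obtain ⟨e', he'⟩ := exists_injective_pair_nat_bool e he
    have hcnt : ∀ x : X, ∃ f : ({i : I | (G x ∩ CW i).Nonempty} : Set I) → ℕ,
        Function.Injective f :=
      fun x => Set.countable_iff_exists_injective.1 (hHfin x).countable
    choose fx hfx using hcnt
    choose wit hwitmem using fun i : I => i.2
    let F' : X → I → ℕ := fun x i => if h : (G x ∩ CW i).Nonempty then fx x ⟨i, h⟩ else 0
    refine ⟨fun i => e' (wit i, F' (wit i) i), ?_⟩
    intro i j hij
    have h1 := he' hij
    have h2 : wit i = wit j := congrArg Prod.fst h1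
    have h3 : F' (wit i) i = F' (wit j) j := congrArg Prod.snd h1
    rw [← h2] at h3
    have hi' : (G (wit i) ∩ CW i).Nonempty := hwitmem i
    have hj' : (G (wit i) ∩ CW j).Nonempty := by rw [h2]; exact hwitmem j
    rw [show F' (wit i) i = fx (wit i) ⟨i, hi'⟩ from dif_pos hi',
        show F' (wit i) j = fx (wit i) ⟨j, hj'⟩ from dif_pos hj'] at h3
    exact Subtype.ext_iff.1 (hfx (wit i) h3)
  -- the events and branch sets
  let ev : X → Set I → Prop := fun x S => (G x ∩ ⋃ i ∈ S, CW i).Nonempty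
  let T : X → ℕ → Set I := fun x => selT b (ev x)
  have hTzero : ∀ x, T x 0 = Set.univ := fun x => rfl
  have hTsucc : ∀ x k,
      (ev x {i ∈ T x k | b i k = false} → T x (k+1) = {i ∈ T x k | b i k = false}) ∧
      (¬ ev x {i ∈ T x k | b i k = false} → T x (k+1) = {i ∈ T x k | b i k = true}) := by
    intro x k
    constructor
    · intro hcond
      show selT b (ev x) (k+1) = _
      rw [selT, if_pos hcond]
    · intro hcond
      show selT b (ev x) (k+1) = _
      rw [selT, if_neg hcond]
  have hTstep_sub : ∀ x k, T x (k+1) ⊆ T x k := by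
    intro x k
    rcases em (ev x {i ∈ T x k | b i k = false}) with hcond | hcond
    · rw [(hTsucc x k).1 hcond]; exact Set.sep_subset _ _
    · rw [(hTsucc x k).2 hcond]; exact Set.sep_subset _ _
  have hTmono : ∀ x, Antitone (T x) :=
    fun x => antitone_nat_of_succ_le (fun k => hTstep_sub x k)
  have hbit : ∀ x k i j, i ∈ T x (k+1) → j ∈ T x (k+1) → b i k = b j k := by
    intro x k i j hi hj
    rcases em (ev x {i ∈ T x k | b i k = false}) with hcond | hcond
    · rw [(hTsucc x k).1 hcond] at hi hj; rw [hi.2, hj.2]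
    · rw [(hTsucc x k).2 hcond] at hi hj; rw [hi.2, hj.2]
  have huniq : ∀ x i j, (∀ k, i ∈ T x k) → (∀ k, j ∈ T x k) → i = j := by
    intro x i j hi hj
    exact hbinj (funext fun k => hbit x k i j (hi (k+1)) (hj (k+1)))
  have hinv : ∀ x k, ∃ i ∈ T x k, (G x ∩ CW i).Nonempty := by
    intro x k
    induction k with
    | zero =>
      obtain ⟨y, hy⟩ := hne x
      have hyU : y ∈ ⋃ i, W i := by rw [Wcover]; trivial
      obtain ⟨i0, hi0⟩ := Set.mem_iUnion.1 hyU
      have hmem : (G x ∩ closure (W i0)).Nonempty := ⟨y, hy, subset_closure hi0⟩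
      exact ⟨⟨i0, ⟨x, hmem⟩⟩, by rw [hTzero]; trivial, hmem⟩
    | succ k ih =>
      rcases em (ev x {i ∈ T x k | b i k = false}) with hcond | hcond
      · obtain ⟨y, hyG, hyU⟩ := hcond
        obtain ⟨i, hiS, hyCW⟩ := Set.mem_iUnion₂.1 hyU
        refine ⟨i, ?_, ⟨y, hyG, hyCW⟩⟩
        rw [(hTsucc x k).1 ⟨y, hyG, hyU⟩]
        exact hiS
      · obtain ⟨i, hiT, hihit⟩ := ih
        obtain ⟨y, hyG, hyCW⟩ := hihit
        have hbtrue : b i k = true := by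
          by_contra hbf
          rw [Bool.not_eq_true] at hbf
          exact hcond ⟨y, hyG, Set.mem_biUnion ⟨hiT, hbf⟩ hyCW⟩
        refine ⟨i, ?_, ⟨y, hyG, hyCW⟩⟩
        rw [(hTsucc x k).2 hcond]
        exact ⟨hiT, hbtrue⟩
  -- pigeonhole: persistent indices exist
  have pigeon : ∀ (x : X) (P : I → Prop), (∀ i, P i → (G x ∩ CW i).Nonempty) →
      (∀ k, ∃ i ∈ T x k, P i) → ∃ i, (∀ k, i ∈ T x k) ∧ P i := by
    intro x P hPhit hPk
    choose f hfT hfP using hPk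
    have : Finite ({i : I | (G x ∩ CW i).Nonempty} : Set I) := (hHfin x).to_subtype
    let f' : ℕ → ({i : I | (G x ∩ CW i).Nonempty} : Set I) :=
      fun k => ⟨f k, hPhit _ (hfP k)⟩
    obtain ⟨i0, hinf⟩ := Finite.exists_infinite_fiber f'
    have hinfset : (f' ⁻¹' {i0}).Infinite := Set.infinite_coe_iff.1 hinf
    have hfi0 : ∀ l ∈ f' ⁻¹' {i0}, f l = (i0 : I) := by
      intro l hl
      have : f' l = i0 := hl
      exact congrArg Subtype.val this
    refine ⟨(i0 : I), ?_, ?_⟩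
    · intro k
      obtain ⟨l, hl, hkl⟩ := hinfset.exists_gt k
      have := hfT l
      rw [hfi0 l hl] at this
      exact hTmono x (le_of_lt hkl) this
    · obtain ⟨l, hl, -⟩ := hinfset.exists_gt 0
      have := hfP l
      rwa [hfi0 l hl] at this
  have hsigma : ∀ x, ∃ i : I, (∀ k, i ∈ T x k) ∧ (G x ∩ CW i).Nonempty :=
    fun x => pigeon x _ (fun i hnh => hnh) (hinv x)
  choose σ hσT hσhit using hsigma
  refine ⟨fun x => G x ∩ CW (σ x), fun x => hσhit x,
    fun x => (hcpt x).inter_right (CWcl _), ?_, fun x => Set.inter_subset_left, ?_⟩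
  · -- measurability of closed-hit events
    intro C hC
    have hclU : ∀ S : Set I, IsClosed (⋃ i ∈ S, (CW i ∩ C)) := by
      intro S
      rw [Set.biUnion_eq_iUnion]
      exact ((lf.comp_injective Subtype.val_injective).subset
        (fun j => Set.inter_subset_left)).isClosed_iUnion (fun j => (CWcl _).inter hC)
    have hclU' : ∀ S : Set I, IsClosed (⋃ i ∈ S, CW i) := by
      intro S
      rw [Set.biUnion_eq_iUnion]
      exact (lf.comp_injective Subtype.val_injective).isClosed_iUnion (fun j => CWcl _)
    have hevm : ∀ S : Set I, MeasurableSet {x | ev x S} := fun S => hmeas _ (hclU' S)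
    -- finiteness of branch ranges, and measurability of branch events
    have hTm : ∀ k : ℕ, (Set.range fun x => T x k).Finite ∧
        ∀ S : Set I, MeasurableSet {x | T x k = S} := by
      intro k
      induction k with
      | zero =>
        constructor
        · refine (Set.finite_singleton Set.univ).subset ?_
          rintro _ ⟨x, rfl⟩
          exact hTzero x
        · intro S
          by_cases hS : S = Set.univ
          · have : {x | T x 0 = S} = Set.univ := by
              ext x; simp [hTzero, hS]
            rw [this]; exact MeasurableSet.univ
          · have : {x | T x 0 = S} = ∅ := by
              ext x
              simp only [Set.mem_setOf_eq, hTzero, Set.mem_empty_iff_false, iff_false]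
              exact fun hcon => hS hcon.symm
            rw [this]; exact MeasurableSet.empty
      | succ k ih =>
        obtain ⟨ihfin, ihm⟩ := ih
        constructor
        · refine ((ihfin.biUnion (fun S _ =>
            (Set.finite_singleton {i ∈ S | b i k = false}).insert {i ∈ S | b i k = true})).subset) ?_
          rintro _ ⟨x, rfl⟩
          refine Set.mem_biUnion ⟨x, rfl⟩ ?_
          beta_reduce
          rcases em (ev x {i ∈ T x k | b i k = false}) with hcond | hcond
          · rw [(hTsucc x k).1 hcond]; right; rfl
          · rw [(hTsucc x k).2 hcond]; left; rfl
        · intro S'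
          have key : {x | T x (k+1) = S'} =
              ⋃ S ∈ (Set.range fun x => T x k), ({x | T x k = S} ∩
                ((if {i ∈ S | b i k = false} = S' then {x | ev x {i ∈ S | b i k = false}} else ∅) ∪
                 (if {i ∈ S | b i k = true} = S' then {x | ev x {i ∈ S | b i k = false}}ᶜ else ∅))) := by
            ext x
            simp only [Set.mem_setOf_eq, Set.mem_iUnion, Set.mem_inter_iff, Set.mem_union,
              Set.mem_range, exists_prop]
            constructor
            · intro hx
              refine ⟨T x k, ⟨x, rfl⟩, rfl, ?_⟩
              rcases em (ev x {i ∈ T x k | b i k = false}) with hcond | hcond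
              · left
                rw [if_pos (by rw [← hx, (hTsucc x k).1 hcond])]
                exact hcond
              · right
                rw [if_pos (by rw [← hx, (hTsucc x k).2 hcond])]
                exact hcond
            · rintro ⟨S, ⟨x', hx'⟩, hTk, hbr⟩
              rcases hbr with hbr | hbr
              · by_cases hcond : {i ∈ S | b i k = false} = S'
                · rw [if_pos hcond] at hbr
                  have hbr' : ev x {i ∈ T x k | b i k = false} := by rw [hTk]; exact hbr
                  rw [(hTsucc x k).1 hbr', hTk, hcond]
                · rw [if_neg hcond] at hbr
                  exact absurd hbr (Set.notMem_empty x)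
              · by_cases hcond : {i ∈ S | b i k = true} = S'
                · rw [if_pos hcond] at hbr
                  have hbr' : ¬ ev x {i ∈ T x k | b i k = false} := by rw [hTk]; exact hbr
                  rw [(hTsucc x k).2 hbr', hTk, hcond]
                · rw [if_neg hcond] at hbr
                  exact absurd hbr (Set.notMem_empty x)
          rw [key]
          refine ihfin.measurableSet_biUnion (fun S _ => ?_)
          refine (ihm S).inter (MeasurableSet.union ?_ ?_)
          · split_ifs
            · exact hevm _
            · exact MeasurableSet.empty
          · split_ifs
            · exact (hevm _).compl
            · exact MeasurableSet.empty
    -- the main identity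
    have main : {x | ((G x ∩ CW (σ x)) ∩ C).Nonempty} =
        ⋂ k, {x | (G x ∩ ⋃ i ∈ T x k, (CW i ∩ C)).Nonempty} := by
      ext x
      simp only [Set.mem_setOf_eq, Set.mem_iInter]
      constructor
      · rintro ⟨y, ⟨hyG, hyCW⟩, hyC⟩ k
        exact ⟨y, hyG, Set.mem_biUnion (hσT x k) ⟨hyCW, hyC⟩⟩
      · intro hk
        have hk' : ∀ k, ∃ i ∈ T x k, (G x ∩ (CW i ∩ C)).Nonempty := by
          intro k
          obtain ⟨y, hyG, hyU⟩ := hk k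
          obtain ⟨i, hiT, hyi⟩ := Set.mem_iUnion₂.1 hyU
          exact ⟨i, hiT, ⟨y, hyG, hyi⟩⟩
        obtain ⟨i, hiT, hihit⟩ := pigeon x (fun i => (G x ∩ (CW i ∩ C)).Nonempty)
          (fun i hi => hi.mono (Set.inter_subset_inter_right _ Set.inter_subset_left)) hk'
        have hieq : i = σ x := huniq x i (σ x) hiT (hσT x)
        rw [hieq] at hihit
        obtain ⟨y, hyG, hyCW, hyC⟩ := hihit
        exact ⟨y, ⟨hyG, hyCW⟩, hyC⟩
    rw [main]
    refine MeasurableSet.iInter fun k => ?_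
    have eq2 : {x | (G x ∩ ⋃ i ∈ T x k, (CW i ∩ C)).Nonempty} =
        ⋃ S ∈ (Set.range fun x => T x k),
          ({x | T x k = S} ∩ {x | (G x ∩ ⋃ i ∈ S, (CW i ∩ C)).Nonempty}) := by
      ext x
      simp only [Set.mem_setOf_eq, Set.mem_iUnion, Set.mem_inter_iff, Set.mem_range, exists_prop]
      constructor
      · intro hx
        exact ⟨T x k, ⟨x, rfl⟩, rfl, hx⟩
      · rintro ⟨S, -, hTk, hx⟩
        rw [hTk]
        exact hx
    rw [eq2]
    exact (hTm k).1.measurableSet_biUnion (fun S _ => ((hTm k).2 S).inter (hmeas _ (hclU S)))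
  · -- diameter bound
    intro x
    have hsub2 : G x ∩ CW (σ x) ⊆ closedBall (σ x).1 δ := by
      intro y hy
      exact closure_ball_subset_closedBall (closure_mono (Wsub _) hy.2)
    calc Metric.diam (G x ∩ CW (σ x)) ≤ Metric.diam (closedBall (σ x).1 δ) :=
          Metric.diam_mono hsub2 Metric.isBounded_closedBall
      _ ≤ 2 * δ := Metric.diam_closedBall hδ.le



theorem core19 (A : X → Set Y) (hne : ∀ x, (A x).Nonempty) (hcpt : ∀ x, IsCompact (A x))
    (hmeas : ∀ C : Set Y, IsClosed C → MeasurableSet {x | (A x ∩ C).Nonempty}) :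
    ∃ g : X → Y, Measurable g ∧ ∀ x, g x ∈ A x := by
  classical
  let P : (X → Set Y) → Prop := fun G => (∀ x, (G x).Nonempty) ∧ (∀ x, IsCompact (G x)) ∧
    (∀ C : Set Y, IsClosed C → MeasurableSet {x | (G x ∩ C).Nonempty})
  have hstep : ∀ (G : {G : X → Set Y // P G}) (n : ℕ), ∃ G' : X → Set Y, P G' ∧
      (∀ x, G' x ⊆ G.1 x) ∧ (∀ x, Metric.diam (G' x) ≤ 2 * (1/2 : ℝ)^n) := by
    intro G n
    obtain ⟨G', h1, h2, h3, h4, h5⟩ := step19 G.1 G.2.1 G.2.2.1 G.2.2.2 ((1/2 : ℝ)^n)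
      (by positivity)
    exact ⟨G', ⟨h1, h2, h3⟩, h4, h5⟩
  let seq : ℕ → {G : X → Set Y // P G} := fun n => Nat.rec ⟨A, hne, hcpt, hmeas⟩
    (fun n p => ⟨(hstep p n).choose, (hstep p n).choose_spec.1⟩) n
  have hseq0 : (seq 0).1 = A := rfl
  have hsubd : ∀ n, (∀ x, (seq (n+1)).1 x ⊆ (seq n).1 x) ∧
      (∀ x, Metric.diam ((seq (n+1)).1 x) ≤ 2 * (1/2 : ℝ)^n) :=
    fun n => ⟨(hstep (seq n) n).choose_spec.2.1, (hstep (seq n) n).choose_spec.2.2⟩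
  have hKne : ∀ x, (⋂ n, (seq n).1 x).Nonempty := by
    intro x
    apply IsCompact.nonempty_iInter_of_sequence_nonempty_isCompact_isClosed
    · exact fun n => (hsubd n).1 x
    · exact fun n => (seq n).2.1 x
    · exact (seq 0).2.2.1 x
    · exact fun n => ((seq n).2.2.1 x).isClosed
  choose g hg using hKne
  have hgmem : ∀ n x, g x ∈ (seq n).1 x := fun n x => Set.mem_iInter.1 (hg x) n
  refine ⟨g, ?_, fun x => by have := hgmem 0 x; rwa [hseq0] at this⟩
  apply measurable_of_isOpen
  intro U hU
  have hpre : g ⁻¹' U = ⋃ n, ({x | ((seq (n+1)).1 x ∩ Uᶜ).Nonempty})ᶜ := by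
    ext x
    simp only [Set.mem_preimage, Set.mem_iUnion, Set.mem_compl_iff, Set.mem_setOf_eq]
    constructor
    · intro hx
      obtain ⟨ε, hε, hball⟩ := Metric.isOpen_iff.1 hU (g x) hx
      obtain ⟨n, hn⟩ := exists_pow_lt_of_lt_one (show (0:ℝ) < ε/2 by linarith)
        (show (1/2 : ℝ) < 1 by norm_num)
      refine ⟨n, ?_⟩
      rw [Set.inter_compl_nonempty_iff]
      rw [not_not]
      intro y hy
      apply hball
      have hd : dist y (g x) ≤ 2 * (1/2 : ℝ)^n :=
        le_trans (Metric.dist_le_diam_of_mem ((seq (n+1)).2.2.1 x).isBounded hy (hgmem (n+1) x))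
          ((hsubd n).2 x)
      exact Metric.mem_ball.2 (lt_of_le_of_lt hd (by linarith))
    · rintro ⟨n, hn⟩
      rw [Set.inter_compl_nonempty_iff, not_not] at hn
      exact hn (hgmem (n+1) x)
  rw [hpre]
  exact MeasurableSet.iUnion fun n => ((seq (n+1)).2.2.2 Uᶜ hU.isClosed_compl).compl

end StepLemma

/-- Projection lemma: a Borel selection of a weakly measurable compact-valued
set-valued map realizing the distance to a continuous map. -/
theorem stmt19 {X Y : Type*}
    [MetricSpace X] [TopologicalSpace.SeparableSpace X] [MeasurableSpace X] [BorelSpace X]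
    [MetricSpace Y] [MeasurableSpace Y] [BorelSpace Y]
    (h : X → Y) (hc : Continuous h)
    (F : X → Set Y)
    (hFne : ∀ x, (F x).Nonempty) (hFcpt : ∀ x, IsCompact (F x))
    -- weak measurability of the set-valued map `F`
    (hFmeas : ∀ U : Set Y, IsOpen U → MeasurableSet {x | (F x ∩ U).Nonempty}) :
    ∃ g : X → Y, Measurable g ∧ (∀ x, g x ∈ F x) ∧
      ∀ x, dist (h x) (g x) = Metric.infDist (h x) (F x) := by
  classical
  set m : X → ℝ := fun x => Metric.infDist (h x) (F x) with hm
  -- L1 : hit events of open sets intersected with balls of fixed radius around `h x`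
  have L1 : ∀ V : Set Y, IsOpen V → ∀ q : ℝ,
      MeasurableSet {x | (F x ∩ (V ∩ ball (h x) q)).Nonempty} := by
    intro V hV q
    rcases isEmpty_or_nonempty X with hX | hX
    · convert MeasurableSet.empty
      exact Set.eq_empty_of_isEmpty _
    obtain ⟨u, hu⟩ := TopologicalSpace.exists_dense_seq X
    have hiden : {x | (F x ∩ (V ∩ ball (h x) q)).Nonempty} =
        ⋃ (k : ℕ), ⋃ (s : ℚ), ({x | dist (h x) (h (u k)) + (s : ℝ) < q} ∩
          {x | (F x ∩ (V ∩ ball (h (u k)) (s : ℝ))).Nonempty}) := by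
      ext x
      simp only [Set.mem_setOf_eq, Set.mem_iUnion, Set.mem_inter_iff]
      constructor
      · rintro ⟨y, hyF, hyV, hyB⟩
        have hyq : dist y (h x) < q := Metric.mem_ball.1 hyB
        set ε : ℝ := (q - dist y (h x))/4 with hε
        have hεpos : 0 < ε := by rw [hε]; linarith
        obtain ⟨η, hη, hcont⟩ := Metric.continuous_iff.1 hc x ε hεpos
        obtain ⟨k, hk⟩ := Metric.denseRange_iff.1 hu x η hη
        have hhk : dist (h (u k)) (h x) < ε := hcont (u k) (by rwa [dist_comm])
        have h1 : dist (h (u k)) y < q - 3*ε := by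
          have ht := dist_triangle (h (u k)) (h x) y
          have : dist (h x) y = dist y (h x) := dist_comm _ _
          rw [hε] at hhk ⊢
          linarith
        obtain ⟨s, hs1, hs2⟩ := exists_rat_btwn (lt_add_of_pos_right (dist (h (u k)) y) hεpos)
        refine ⟨k, s, ?_, ⟨y, hyF, hyV, ?_⟩⟩
        · have : dist (h x) (h (u k)) = dist (h (u k)) (h x) := dist_comm _ _
          rw [this]
          linarith
        · rw [Metric.mem_ball, dist_comm]
          exact hs1
      · rintro ⟨k, s, hks, y, hyF, hyV, hyB⟩
        refine ⟨y, hyF, hyV, Metric.mem_ball.2 ?_⟩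
        have h1 : dist y (h (u k)) < (s : ℝ) := Metric.mem_ball.1 hyB
        have ht := dist_triangle y (h (u k)) (h x)
        have : dist (h (u k)) (h x) = dist (h x) (h (u k)) := dist_comm _ _
        linarith
    rw [hiden]
    refine MeasurableSet.iUnion fun k => MeasurableSet.iUnion fun s => MeasurableSet.inter ?_ ?_
    · have hcont : Continuous fun x => dist (h x) (h (u k)) + (s : ℝ) :=
        (hc.dist continuous_const).add continuous_const
      exact measurableSet_lt hcont.measurable measurable_const
    · exact hFmeas _ (hV.inter isOpen_ball)
  -- measurability of the distance function `m`
  have hmm : Measurable m := by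
    apply measurable_of_Iio
    intro t
    have : m ⁻¹' (Set.Iio t) = {x | (F x ∩ (Set.univ ∩ ball (h x) t)).Nonempty} := by
      ext x
      simp only [Set.mem_preimage, Set.mem_Iio, Set.mem_setOf_eq, hm]
      rw [Metric.infDist_lt_iff (hFne x)]
      constructor
      · rintro ⟨y, hyF, hyd⟩
        exact ⟨y, hyF, trivial, Metric.mem_ball.2 (by rwa [dist_comm])⟩
      · rintro ⟨y, hyF, -, hyB⟩
        exact ⟨y, hyF, by rw [dist_comm]; exact Metric.mem_ball.1 hyB⟩
    rw [this]
    exact L1 _ isOpen_univ t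
  -- L2 : hit events with radius `m x + c`
  have L2 : ∀ V : Set Y, IsOpen V → ∀ c : ℝ,
      MeasurableSet {x | (F x ∩ (V ∩ ball (h x) (m x + c))).Nonempty} := by
    intro V hV c
    have hiden : {x | (F x ∩ (V ∩ ball (h x) (m x + c))).Nonempty} =
        ⋃ q : ℚ, ({x | (q : ℝ) < m x + c} ∩
          {x | (F x ∩ (V ∩ ball (h x) (q : ℝ))).Nonempty}) := by
      ext x
      simp only [Set.mem_setOf_eq, Set.mem_iUnion, Set.mem_inter_iff]
      constructor
      · rintro ⟨y, hyF, hyV, hyB⟩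
        obtain ⟨q, hq1, hq2⟩ := exists_rat_btwn (Metric.mem_ball.1 hyB)
        exact ⟨q, hq2, y, hyF, hyV, Metric.mem_ball.2 hq1⟩
      · rintro ⟨q, hq, y, hyF, hyV, hyB⟩
        exact ⟨y, hyF, hyV, Metric.mem_ball.2 (lt_trans (Metric.mem_ball.1 hyB) hq)⟩
    rw [hiden]
    exact MeasurableSet.iUnion fun q =>
      (measurableSet_lt measurable_const (hmm.add_const c)).inter (L1 V hV q)
  -- the argmin set-valued map
  set A : X → Set Y := fun x => F x ∩ {y | dist (h x) y ≤ m x} with hA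
  have hAne : ∀ x, (A x).Nonempty := by
    intro x
    obtain ⟨y, hyF, hyd⟩ := (hFcpt x).exists_infDist_eq_dist (hFne x) (h x)
    exact ⟨y, hyF, le_of_eq hyd.symm⟩
  have hAcpt : ∀ x, IsCompact (A x) :=
    fun x => (hFcpt x).inter_right (isClosed_le (continuous_const.dist continuous_id)
      continuous_const)
  have hAmeas : ∀ C : Set Y, IsClosed C → MeasurableSet {x | (A x ∩ C).Nonempty} := by
    intro C hC
    rcases eq_empty_or_nonempty C with rfl | hCne
    · have : {x | (A x ∩ (∅ : Set Y)).Nonempty} = ∅ := by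
        ext x; simp
      rw [this]; exact MeasurableSet.empty
    have hiden : {x | (A x ∩ C).Nonempty} =
        ⋂ j : ℕ, {x | (F x ∩ ({y | Metric.infDist y C < 1/(j+1)} ∩
          ball (h x) (m x + 1/(j+1)))).Nonempty} := by
      ext x
      simp only [Set.mem_setOf_eq, Set.mem_iInter]
      constructor
      · rintro ⟨y, ⟨hyF, hyd⟩, hyC⟩ j
        refine ⟨y, hyF, ?_, Metric.mem_ball.2 ?_⟩
        · show Metric.infDist y C < 1/(j+1)
          rw [Metric.infDist_zero_of_mem hyC]
          positivity
        · rw [dist_comm]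
          have hj : (0 : ℝ) < 1/(j+1) := by positivity
          have : dist (h x) y ≤ m x := hyd
          linarith
      · intro hj
        choose ys hysF hysV hysB using hj
        obtain ⟨y, hyF, φ, hφ, hconv⟩ := (hFcpt x).tendsto_subseq hysF
        have honediv : Tendsto (fun j : ℕ => (1 : ℝ)/(j+1)) atTop (nhds 0) := by
          exact_mod_cast tendsto_one_div_add_atTop_nhds_zero_nat (𝕜 := ℝ)
        have hcomp : ∀ j : ℕ, (1 : ℝ)/(φ j + 1) ≤ 1/(j+1) := by
          intro j
          apply one_div_le_one_div_of_le (by positivity)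
          have := hφ.le_apply (x := j)
          exact_mod_cast Nat.add_le_add_right this 1
        have hyC : y ∈ C := by
          have h1 : Tendsto (fun j => Metric.infDist (ys (φ j)) C) atTop
              (nhds (Metric.infDist y C)) :=
            ((Metric.continuous_infDist_pt C).tendsto y).comp hconv
          have h3 : Metric.infDist y C ≤ 0 := by
            refine le_of_tendsto_of_tendsto' h1 honediv (fun j => ?_)
            exact le_trans (le_of_lt (hysV (φ j))) (hcomp j)
          have h4 : Metric.infDist y C = 0 := le_antisymm h3 Metric.infDist_nonneg
          have h5 := (Metric.mem_closure_iff_infDist_zero hCne).2 h4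
          rwa [hC.closure_eq] at h5
        have hyd : dist (h x) y ≤ m x := by
          have h1 : Tendsto (fun j => dist (h x) (ys (φ j))) atTop (nhds (dist (h x) y)) :=
            tendsto_const_nhds.dist hconv
          have h2 : Tendsto (fun j : ℕ => m x + 1/(j+1)) atTop (nhds (m x + 0)) :=
            tendsto_const_nhds.add honediv
          rw [add_zero] at h2
          refine le_of_tendsto_of_tendsto' h1 h2 (fun j => ?_)
          have hb := Metric.mem_ball.1 (hysB (φ j))
          rw [dist_comm] at hb
          have := hcomp j
          linarith
        exact ⟨y, ⟨hyF, hyd⟩, hyC⟩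
    rw [hiden]
    refine MeasurableSet.iInter fun j => L2 _ ?_ _
    have : ({y | Metric.infDist y C < 1/(j+1)} : Set Y) =
        (fun y => Metric.infDist y C) ⁻¹' (Set.Iio (1/(j+1))) := rfl
    rw [this]
    exact (Metric.continuous_infDist_pt C).isOpen_preimage _ isOpen_Iio
  obtain ⟨g, hgm, hgmem⟩ := core19 A hAne hAcpt hAmeas
  refine ⟨g, hgm, fun x => (hgmem x).1, fun x => ?_⟩
  exact le_antisymm (hgmem x).2 (Metric.infDist_le_dist_of_mem (hgmem x).1)
end
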